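/- Let m ≥ 1, let M, N ⊆ [m] with M ⊊ [m] and ∅ ≠ N ⊊ [m], and let D = aΔ_M^c + cΔ_N^c ⊆ E^m. Then the binary Gray image Φ(C^R_D) is an F₂-linear code of length 2(2^m−2^{|M|})(2^m−2^{|N|}), with 2^m codewords (F₂-dimension m), minimum distance (2^m−2^{|M|})(2^m−2^{|N|}), and every nonzero codeword has Hamming weight in {(2^m−2^{|M|})(2^m−2^{|N|−1}), 2^m(2^m−2^{|M|})−2^{m+|N|−1}, (2^m−2^{|M|})(2^m−2^{|N|})}. Moreover, Φ(C^R_D) is a minimal code, and if |M|+|N| ≥ 3 then Φ(C^R_D) is self-orthogonal. -/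

import Mathlib

open Finset

/-- The simplicial complex `Δ_M ⊆ 𝔽₂^m` generated by `M ⊆ [m]`:
all vectors whose support is contained in `M`. -/
def deltaC {m : ℕ} (M : Finset (Fin m)) : Finset (Fin m → ZMod 2) :=
  Finset.univ.filter (fun w => ∀ i, w i ≠ 0 → i ∈ M)

/-- Dot product over `𝔽₂`. -/
def dotp {m : ℕ} (x y : Fin m → ZMod 2) : ZMod 2 := ∑ i, x i * y i

/-- The Gray map on a single element `a·s + c·t ↔ (s, t)` of `E = 𝔽₂ × 𝔽₂`:
`Φ(as + ct) = (t, s + t)`. -/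
def grayPair (e : ZMod 2 × ZMod 2) : Fin 2 → ZMod 2 := ![e.2, e.1 + e.2]

/-- The left codeword `c^L_D(v)` for `v = aα + cβ ↔ (α, β)`:
its coordinate at `d = (t₁, t₂) ∈ D` is `a(α·t₁) + c(β·t₁) ↔ (α·t₁, β·t₁)`. -/
def cwL {m : ℕ} (Ds : Finset ((Fin m → ZMod 2) × (Fin m → ZMod 2)))
    (v : (Fin m → ZMod 2) × (Fin m → ZMod 2)) :
    {d // d ∈ Ds} → ZMod 2 × ZMod 2 :=
  fun d => (dotp v.1 d.1.1, dotp v.2 d.1.1)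

/-- The Gray image `Φ(c^L_D(v)) ∈ 𝔽₂^{2|D|}` of the left codeword `c^L_D(v)`;
its Hamming weight (`hammingNorm`) is the Lee weight of `c^L_D(v)`. -/
def gcwL {m : ℕ} (Ds : Finset ((Fin m → ZMod 2) × (Fin m → ZMod 2)))
    (v : (Fin m → ZMod 2) × (Fin m → ZMod 2)) :
    {d // d ∈ Ds} × Fin 2 → ZMod 2 :=
  fun x => grayPair (cwL Ds v x.1) x.2

/-- The right codeword `c^R_D(v)` for `v = aα + cβ ↔ (α, β)`:
its coordinate at `d = (t₁, t₂) ∈ D` is `a(t₁·α) + c(t₂·α) ↔ (t₁·α, t₂·α)`. -/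
def cwR {m : ℕ} (Ds : Finset ((Fin m → ZMod 2) × (Fin m → ZMod 2)))
    (v : (Fin m → ZMod 2) × (Fin m → ZMod 2)) :
    {d // d ∈ Ds} → ZMod 2 × ZMod 2 :=
  fun d => (dotp d.1.1 v.1, dotp d.1.2 v.1)

/-- The Gray image `Φ(c^R_D(v)) ∈ 𝔽₂^{2|D|}` of the right codeword `c^R_D(v)`;
its Hamming weight (`hammingNorm`) is the Lee weight of `c^R_D(v)`. -/
def gcwR {m : ℕ} (Ds : Finset ((Fin m → ZMod 2) × (Fin m → ZMod 2)))
    (v : (Fin m → ZMod 2) × (Fin m → ZMod 2)) :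
    {d // d ∈ Ds} × Fin 2 → ZMod 2 :=
  fun x => grayPair (cwR Ds v x.1) x.2

namespace Aux18
variable {m : ℕ}

lemma z2 (x : ZMod 2) : x = 0 ∨ x = 1 := by revert x; decide

lemma z2ne (x : ZMod 2) : x ≠ 0 ↔ x = 1 := by revert x; decide

lemma z2add (a b : ZMod 2) : a + (b + a) = b := by revert a b; decide

lemma z2neadd (x y : ZMod 2) (h : x ≠ y) : x + y = 1 := by revert x y; decide

lemma mem_deltaC {K : Finset (Fin m)} {t : Fin m → ZMod 2} :
    t ∈ deltaC K ↔ ∀ i, t i ≠ 0 → i ∈ K := by simp [deltaC]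

def ei (i : Fin m) : Fin m → ZMod 2 := fun j => if j = i then 1 else 0

lemma dotp_ei_left (i : Fin m) (α : Fin m → ZMod 2) : dotp (ei i) α = α i := by
  simp [dotp, ei, ite_mul]

lemma dotp_add_left (x y z : Fin m → ZMod 2) : dotp (x + y) z = dotp x z + dotp y z := by
  simp [dotp, add_mul, Finset.sum_add_distrib]

lemma dotp_add_right (x y z : Fin m → ZMod 2) : dotp x (y + z) = dotp x y + dotp x z := by
  simp [dotp, mul_add, Finset.sum_add_distrib]

lemma dotp_zero_right (x : Fin m → ZMod 2) : dotp x 0 = 0 := by simp [dotp]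

lemma card_deltaC (K : Finset (Fin m)) : (deltaC K).card = 2 ^ K.card := by
  classical
  have h : (deltaC K).card = Fintype.card (K → ZMod 2) := by
    apply Finset.card_nbij' (i := fun t => fun i : K => t i.1)
      (j := fun f => fun i => if h : i ∈ K then f ⟨i, h⟩ else 0)
    · intro t ht; exact Finset.mem_univ _
    · intro f hf
      simp only [Finset.mem_coe, mem_deltaC]
      intro i hi
      by_contra h
      simp [h] at hi
    · intro t ht
      funext i
      by_cases h : i ∈ K
      · simp [h]
      · simp [h]
        rw [Finset.mem_coe, mem_deltaC] at ht
        by_contra hne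
        exact h (ht i (Ne.symm hne))
    · intro f hf; funext i; simp [i.2]
  rw [h]
  simp [Fintype.card_fun]

lemma deltaC_univ : deltaC (Finset.univ : Finset (Fin m)) = Finset.univ := by
  simp [deltaC]

lemma count_split (K : Finset (Fin m)) (α : Fin m → ZMod 2) :
    ((deltaC K).filter (fun t => dotp t α = 1)).card
      + ((deltaC K).filter (fun t => dotp t α = 0)).card = 2 ^ K.card := by
  rw [← card_deltaC K]
  have h : ((deltaC K).filter (fun t => dotp t α = 0)) = ((deltaC K).filter (fun t => ¬ dotp t α = 1)) := by
    apply Finset.filter_congr; intro t _; simp only [← z2ne, not_not, eq_iff_iff]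
  rw [h]
  exact Finset.card_filter_add_card_filter_not _

lemma addei (i : Fin m) (t : Fin m → ZMod 2) : t + ei i + ei i = t := by
  funext j
  by_cases hji : j = i <;> simp [ei, hji]
  rw [add_assoc]
  norm_num
  decide

lemma memdadd (K : Finset (Fin m)) (i : Fin m) (hi : i ∈ K) (t : Fin m → ZMod 2)
    (ht : t ∈ deltaC K) : t + ei i ∈ deltaC K := by
  rw [mem_deltaC]; intro j hj
  by_cases hji : j = i
  · exact hji ▸ hi
  · apply (mem_deltaC.1 ht) j
    simpa [ei, hji] using hj

lemma two_mul_count (K : Finset (Fin m)) (α : Fin m → ZMod 2) (i : Fin m)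
    (hi : i ∈ K) (hα : α i = 1) :
    2 * ((deltaC K).filter (fun t => dotp t α = 1)).card = 2 ^ K.card := by
  have key : ((deltaC K).filter (fun t => dotp t α = 1)).card
      = ((deltaC K).filter (fun t => dotp t α = 0)).card := by
    refine Finset.card_nbij' (fun t => t + ei i) (fun t => t + ei i) ?_ ?_ ?_ ?_
    · intro t ht
      simp only [Finset.mem_coe, Finset.mem_filter] at ht ⊢
      refine ⟨memdadd K i hi t ht.1, ?_⟩
      rw [dotp_add_left, dotp_ei_left, ht.2, hα]; decide
    · intro t ht
      simp only [Finset.mem_coe, Finset.mem_filter] at ht ⊢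
      refine ⟨memdadd K i hi t ht.1, ?_⟩
      rw [dotp_add_left, dotp_ei_left, ht.2, hα]; decide
    · intro t _; exact addei i t
    · intro t _; exact addei i t
  have := count_split K α
  omega

lemma count_zero (K : Finset (Fin m)) (α : Fin m → ZMod 2) (h : ∀ i ∈ K, α i = 0) :
    ∀ t ∈ deltaC K, dotp t α = 0 := by
  intro t ht
  unfold dotp
  apply Finset.sum_eq_zero
  intro i _
  by_cases hti : t i = 0
  · simp [hti]
  · rw [h i (mem_deltaC.1 ht i hti)]; ring

lemma hamming_gcwR (D1 D2 : Finset (Fin m → ZMod 2)) (v : (Fin m → ZMod 2) × (Fin m → ZMod 2)) :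
    hammingNorm (gcwR (D1 ×ˢ D2) v) =
      ∑ t₁ ∈ D1, ∑ t₂ ∈ D2,
        ((if dotp t₂ v.1 = 1 then 1 else 0) + (if dotp t₁ v.1 + dotp t₂ v.1 = 1 then 1 else 0)) := by
  classical
  rw [hammingNorm, Finset.card_filter]
  rw [← Finset.univ_product_univ, Finset.sum_product]
  have hstep : ∀ x : {d // d ∈ D1 ×ˢ D2},
      (∑ y : Fin 2, if gcwR (D1 ×ˢ D2) v (x, y) ≠ 0 then 1 else 0) =
      (fun d : (Fin m → ZMod 2) × (Fin m → ZMod 2) =>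
        ((if dotp d.2 v.1 = 1 then 1 else 0) + (if dotp d.1 v.1 + dotp d.2 v.1 = 1 then (1:ℕ) else 0))) x.val := by
    intro x
    rw [Fin.sum_univ_two]
    simp only [gcwR, cwR, grayPair]
    norm_num [z2ne]
  rw [Finset.sum_congr rfl (fun x _ => hstep x), Finset.univ_eq_attach,
    Finset.sum_attach (D1 ×ˢ D2) (fun d : (Fin m → ZMod 2) × (Fin m → ZMod 2) =>
      ((if dotp d.2 v.1 = 1 then 1 else 0) + (if dotp d.1 v.1 + dotp d.2 v.1 = 1 then (1:ℕ) else 0)))]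
  rw [Finset.sum_product]

lemma double_sum (D1 D2 : Finset (Fin m → ZMod 2)) (α : Fin m → ZMod 2) :
    (∑ t₁ ∈ D1, ∑ t₂ ∈ D2,
      ((if dotp t₂ α = 1 then 1 else 0) + (if dotp t₁ α + dotp t₂ α = 1 then (1:ℕ) else 0)))
    = (D1.filter (fun t => dotp t α = 1)).card *
        ((D2.filter (fun t => dotp t α = 1)).card + (D2.filter (fun t => dotp t α = 0)).card)
      + 2 * (D1.filter (fun t => dotp t α = 0)).card * (D2.filter (fun t => dotp t α = 1)).card := by
  classical
  have hnot : D1.filter (fun t => ¬ dotp t α = 1) = D1.filter (fun t => dotp t α = 0) := by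
    apply Finset.filter_congr; intro t _; simp only [← z2ne, not_not, eq_iff_iff]
  rw [← Finset.sum_filter_add_sum_filter_not D1 (fun t => dotp t α = 1)]
  have h1 : ∀ t₁ ∈ D1.filter (fun t => dotp t α = 1),
      (∑ t₂ ∈ D2, ((if dotp t₂ α = 1 then 1 else 0) + (if dotp t₁ α + dotp t₂ α = 1 then (1:ℕ) else 0)))
      = (D2.filter (fun t => dotp t α = 1)).card + (D2.filter (fun t => dotp t α = 0)).card := by
    intro t₁ ht₁
    rw [Finset.mem_filter] at ht₁
    rw [Finset.sum_add_distrib, Finset.card_filter, Finset.card_filter]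
    congr 1
    apply Finset.sum_congr rfl
    intro t₂ _
    rw [ht₁.2]
    rcases z2 (dotp t₂ α) with h0 | h0 <;> rw [h0] <;> decide
  have h0 : ∀ t₁ ∈ D1.filter (fun t => ¬ dotp t α = 1),
      (∑ t₂ ∈ D2, ((if dotp t₂ α = 1 then 1 else 0) + (if dotp t₁ α + dotp t₂ α = 1 then (1:ℕ) else 0)))
      = 2 * (D2.filter (fun t => dotp t α = 1)).card := by
    intro t₁ ht₁
    rw [Finset.mem_filter, ← z2ne, not_not] at ht₁
    rw [Finset.sum_add_distrib, Finset.card_filter, two_mul]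
    congr 1
    apply Finset.sum_congr rfl
    intro t₂ _
    rw [ht₁.2, zero_add]
  rw [Finset.sum_congr rfl h1, Finset.sum_congr rfl h0, Finset.sum_const, Finset.sum_const,
    hnot, smul_eq_mul, smul_eq_mul]
  ring

lemma card_space : Fintype.card (Fin m → ZMod 2) = 2 ^ m := by
  simp [Fintype.card_fun]

lemma compl_count (K : Finset (Fin m)) (p : (Fin m → ZMod 2) → Prop) [DecidablePred p] :
    (((deltaC K)ᶜ).filter p).card + ((deltaC K).filter p).card
      = ((Finset.univ : Finset (Fin m → ZMod 2)).filter p).card := by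
  rw [← Finset.card_union_of_disjoint, ← Finset.filter_union, Finset.union_comm, Finset.union_compl]
  exact Finset.disjoint_filter_filter disjoint_compl_left

lemma ei_ne_zero (i : Fin m) : ei i ≠ 0 := by
  intro h
  have := congrFun h i
  simp [ei] at this

lemma ei_not_mem {K : Finset (Fin m)} {j : Fin m} (hj : j ∉ K) : ei j ∉ deltaC K := by
  rw [mem_deltaC]
  intro h
  exact hj (h j (by simp [ei]))

lemma zero_mem_deltaC (K : Finset (Fin m)) : (0 : Fin m → ZMod 2) ∈ deltaC K := by
  rw [mem_deltaC]; intro i hi; simp at hi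

lemma add_self_vec (t : Fin m → ZMod 2) : t + t = 0 := by
  funext j
  rcases z2 (t j) with h | h <;> simp [h] <;> decide

lemma add_add_cancel (u t : Fin m → ZMod 2) : u + (u + t) = t := by
  rw [← add_assoc, add_self_vec, zero_add]

lemma exists_dotp_one (K : Finset (Fin m)) (hK : K ≠ Finset.univ) (α : Fin m → ZMod 2)
    (i : Fin m) (hαi : α i = 1) :
    ∃ t, t ∉ deltaC K ∧ dotp t α = 1 := by
  obtain ⟨j, _, hj⟩ := Finset.exists_of_ssubset (Finset.ssubset_univ_iff.2 hK)
  rcases z2 (α j) with hj0 | hj1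
  · refine ⟨ei i + ei j, ?_, ?_⟩
    · rw [mem_deltaC]
      intro h
      apply hj
      apply h j
      have hij : i ≠ j := by intro he; rw [he, hj0] at hαi; exact absurd hαi (by decide)
      simp [ei, hij, Ne.symm hij]
    · rw [dotp_add_left, dotp_ei_left, dotp_ei_left, hαi, hj0, add_zero]
  · exact ⟨ei j, ei_not_mem hj, by rw [dotp_ei_left, hj1]⟩

lemma sumset (M N : Finset (Fin m)) (hMc : M.card < m) (hNc : N.card < m)
    (u : Fin m → ZMod 2) (hu : u ∈ deltaC N) :
    ∃ t₁, t₁ ∉ deltaC M ∧ u + t₁ ∉ deltaC N := by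
  classical
  set Bad := deltaC M ∪ (deltaC N).image (fun t => u + t) with hBad
  have hinter : (0 : Fin m → ZMod 2) ∈ deltaC M ∩ (deltaC N).image (fun t => u + t) := by
    rw [Finset.mem_inter]
    refine ⟨zero_mem_deltaC M, Finset.mem_image.2 ⟨u, hu, add_self_vec u⟩⟩
  have hcard : Bad.card < 2 ^ m := by
    have h1 : Bad.card + ((deltaC M) ∩ (deltaC N).image (fun t => u + t)).card
        = (deltaC M).card + ((deltaC N).image (fun t => u + t)).card :=
      Finset.card_union_add_card_inter _ _
    have h2 : 1 ≤ ((deltaC M) ∩ (deltaC N).image (fun t => u + t)).card :=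
      Finset.card_pos.2 ⟨0, hinter⟩
    have h3 : ((deltaC N).image (fun t => u + t)).card = 2 ^ N.card := by
      rw [Finset.card_image_of_injective _ (add_right_injective u), card_deltaC]
    have h4 : (2:ℕ) ^ M.card ≤ 2 ^ (m - 1) := Nat.pow_le_pow_right (by norm_num) (by omega)
    have h5 : (2:ℕ) ^ N.card ≤ 2 ^ (m - 1) := Nat.pow_le_pow_right (by norm_num) (by omega)
    have h6 : 2 * 2 ^ (m - 1) = 2 ^ m := by
      rw [← pow_succ']
      congr 1
      omega
    rw [card_deltaC, h3] at h1
    omega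
  have hne : ∃ t, t ∉ Bad := by
    by_contra h
    push_neg at h
    have hsub : (Finset.univ : Finset (Fin m → ZMod 2)) ⊆ Bad := fun t _ => h t
    have := Finset.card_le_card hsub
    rw [Finset.card_univ, card_space] at this
    omega
  obtain ⟨t, ht⟩ := hne
  rw [hBad, Finset.mem_union] at ht
  push_neg at ht
  refine ⟨t, ht.1, fun hmem => ?_⟩
  exact ht.2 (Finset.mem_image.2 ⟨u + t, hmem, add_add_cancel u t⟩)

lemma sum_zmod {X : Type*} [DecidableEq X] (s : Finset X) (f : X → ZMod 2) :
    ∑ x ∈ s, f x = (((s.filter (fun x => f x = 1)).card : ℕ) : ZMod 2) := by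
  classical
  rw [← Finset.sum_filter_add_sum_filter_not s (fun x => f x = 1)]
  have h1 : ∑ x ∈ s.filter (fun x => f x = 1), f x
      = ((s.filter (fun x => f x = 1)).card : ZMod 2) := by
    rw [Finset.sum_congr rfl (fun x hx => (Finset.mem_filter.1 hx).2), Finset.sum_const,
      nsmul_eq_mul, mul_one]
  have h2 : ∑ x ∈ s.filter (fun x => ¬ f x = 1), f x = 0 := by
    apply Finset.sum_eq_zero
    intro x hx
    rcases z2 (f x) with h | h
    · exact h
    · exact absurd h (Finset.mem_filter.1 hx).2
  rw [h1, h2, add_zero]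

lemma grayPair_add (e f : ZMod 2 × ZMod 2) (j : Fin 2) :
    grayPair (e + f) j = grayPair e j + grayPair f j := by
  fin_cases j <;> simp [grayPair] <;> ring

lemma eq_of_dotp_imp (α α' : Fin m → ZMod 2) (i : Fin m) (hi : α' i = 1)
    (H : ∀ u, dotp u α' = 1 → dotp u α = 1) : α = α' := by
  have hii : α i = 1 := by
    have := H (ei i) (by rw [dotp_ei_left, hi])
    rwa [dotp_ei_left] at this
  funext j
  rcases z2 (α' j) with h | h
  · have h2 : dotp (ei i + ei j) α' = 1 := by
      rw [dotp_add_left, dotp_ei_left, dotp_ei_left, hi, h, add_zero]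
    have h3 := H _ h2
    rw [dotp_add_left, dotp_ei_left, dotp_ei_left, hii] at h3
    rw [h]
    rcases z2 (α j) with h4 | h4
    · exact h4
    · rw [h4] at h3; exact absurd h3 (by decide)
  · rw [h]
    have := H (ei j) (by rw [dotp_ei_left, h])
    rwa [dotp_ei_left] at this

lemma gcwR_fst_eq (Ds : Finset ((Fin m → ZMod 2) × (Fin m → ZMod 2)))
    (v w : (Fin m → ZMod 2) × (Fin m → ZMod 2)) (h : v.1 = w.1) :
    gcwR Ds v = gcwR Ds w := by
  funext x
  simp [gcwR, cwR, h]

lemma gcwR_zero (Ds : Finset ((Fin m → ZMod 2) × (Fin m → ZMod 2)))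
    (v : (Fin m → ZMod 2) × (Fin m → ZMod 2)) (h : v.1 = 0) :
    gcwR Ds v = 0 := by
  funext x
  obtain ⟨d, j⟩ := x
  simp only [gcwR, cwR, h, dotp_zero_right]
  fin_cases j <;> simp [grayPair]

lemma quad_id (a b c d : ZMod 2) : b*d + (a+b)*(c+d) = a*c + a*d + b*c := by
  revert a b c d; decide

lemma sum_gcwR_mul (D1 D2 : Finset (Fin m → ZMod 2))
    (v w : (Fin m → ZMod 2) × (Fin m → ZMod 2)) :
    ∑ x : {d // d ∈ D1 ×ˢ D2} × Fin 2, gcwR (D1 ×ˢ D2) v x * gcwR (D1 ×ˢ D2) w x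
    = ∑ t₁ ∈ D1, ∑ t₂ ∈ D2,
        (dotp t₁ v.1 * dotp t₁ w.1 + dotp t₁ v.1 * dotp t₂ w.1 + dotp t₂ v.1 * dotp t₁ w.1) := by
  classical
  rw [← Finset.univ_product_univ, Finset.sum_product]
  have hstep : ∀ x : {d // d ∈ D1 ×ˢ D2},
      (∑ y : Fin 2, gcwR (D1 ×ˢ D2) v (x, y) * gcwR (D1 ×ˢ D2) w (x, y)) =
      (fun d : (Fin m → ZMod 2) × (Fin m → ZMod 2) =>
        dotp d.1 v.1 * dotp d.1 w.1 + dotp d.1 v.1 * dotp d.2 w.1 + dotp d.2 v.1 * dotp d.1 w.1) x.val := by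
    intro x
    rw [Fin.sum_univ_two]
    simp only [gcwR, cwR, grayPair]
    simp only [Matrix.cons_val_zero, Matrix.cons_val_one, Matrix.head_cons]
    exact quad_id _ _ _ _
  rw [Finset.sum_congr rfl (fun x _ => hstep x), Finset.univ_eq_attach,
    Finset.sum_attach (D1 ×ˢ D2) (fun d : (Fin m → ZMod 2) × (Fin m → ZMod 2) =>
      dotp d.1 v.1 * dotp d.1 w.1 + dotp d.1 v.1 * dotp d.2 w.1 + dotp d.2 v.1 * dotp d.1 w.1)]
  rw [Finset.sum_product]

lemma cB_zero {K : Finset (Fin m)} {α : Fin m → ZMod 2} (h : ¬ ∃ i ∈ K, α i = 1) :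
    ((deltaC K).filter (fun t => dotp t α = 1)).card = 0 := by
  rw [Finset.card_eq_zero, Finset.filter_eq_empty_iff]
  intro t ht
  push_neg at h
  have hz : ∀ i ∈ K, α i = 0 := by
    intro i hi
    rcases z2 (α i) with h0 | h0
    · exact h0
    · exact absurd h0 (h i hi)
  rw [count_zero K α hz t ht]
  decide

end Aux18
namespace Aux18
variable {m : ℕ}

lemma weight_master (M N : Finset (Fin m)) (hm : 1 ≤ m)
    (hMc : M.card < m) (hNc : N.card < m) (hN1 : 1 ≤ N.card)
    (α β : Fin m → ZMod 2) (i0 : Fin m) (hα0 : α i0 = 1) :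
    ((∃ i ∈ N, α i = 1) →
      hammingNorm (gcwR ((deltaC M)ᶜ ×ˢ (deltaC N)ᶜ) (α, β))
        = (2^m - 2^M.card) * (2^m - 2^N.card)) ∧
    ((¬ ∃ i ∈ N, α i = 1) → (∃ i ∈ M, α i = 1) →
      hammingNorm (gcwR ((deltaC M)ᶜ ×ˢ (deltaC N)ᶜ) (α, β))
        = (2^m - 2^M.card) * (2^m - 2^(N.card - 1))) ∧
    ((¬ ∃ i ∈ N, α i = 1) → (¬ ∃ i ∈ M, α i = 1) →
      hammingNorm (gcwR ((deltaC M)ᶜ ×ˢ (deltaC N)ᶜ) (α, β))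
        = 2^m * (2^m - 2^M.card) - 2^(m + N.card - 1)) ∧
    ((2^m - 2^M.card) * (2^m - 2^N.card)
        ≤ hammingNorm (gcwR ((deltaC M)ᶜ ×ˢ (deltaC N)ᶜ) (α, β))) := by
  classical
  set A := (((deltaC M)ᶜ).filter (fun t => dotp t α = 1)).card with hdA
  set A0 := (((deltaC M)ᶜ).filter (fun t => dotp t α = 0)).card with hdA0
  set B := (((deltaC N)ᶜ).filter (fun t => dotp t α = 1)).card with hdB
  set B0 := (((deltaC N)ᶜ).filter (fun t => dotp t α = 0)).card with hdB0
  set cA := ((deltaC M).filter (fun t => dotp t α = 1)).card with hdcA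
  set cA0 := ((deltaC M).filter (fun t => dotp t α = 0)).card with hdcA0
  set cB := ((deltaC N).filter (fun t => dotp t α = 1)).card with hdcB
  set cB0 := ((deltaC N).filter (fun t => dotp t α = 0)).card with hdcB0
  set u1 := ((Finset.univ : Finset (Fin m → ZMod 2)).filter (fun t => dotp t α = 1)).card with hdu1
  set u0 := ((Finset.univ : Finset (Fin m → ZMod 2)).filter (fun t => dotp t α = 0)).card with hdu0
  have hW : hammingNorm (gcwR ((deltaC M)ᶜ ×ˢ (deltaC N)ᶜ) (α, β)) = A * (B + B0) + 2 * A0 * B := by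
    rw [hamming_gcwR]
    exact double_sum _ _ α
  have h1 : A + cA = u1 := compl_count M _
  have h2 : A0 + cA0 = u0 := compl_count M _
  have h3 : B + cB = u1 := compl_count N _
  have h4 : B0 + cB0 = u0 := compl_count N _
  have h5 : cA + cA0 = 2 ^ M.card := count_split M α
  have h6 : cB + cB0 = 2 ^ N.card := count_split N α
  have h7 : u1 + u0 = 2 ^ m := by
    have h := count_split (Finset.univ : Finset (Fin m)) α
    rwa [deltaC_univ, Finset.card_univ, Fintype.card_fin] at h
  have h8 : 2 * u1 = 2 ^ m := by
    have h := two_mul_count (Finset.univ : Finset (Fin m)) α i0 (Finset.mem_univ _) hα0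
    rwa [deltaC_univ, Finset.card_univ, Fintype.card_fin] at h
  have hcA : cA = 0 ∨ 2 * cA = 2 ^ M.card := by
    by_cases hex : ∃ i ∈ M, α i = 1
    · obtain ⟨i, hi, hαi⟩ := hex
      exact Or.inr (two_mul_count M α i hi hαi)
    · exact Or.inl (cB_zero hex)
  have hcB : cB = 0 ∨ 2 * cB = 2 ^ N.card := by
    by_cases hex : ∃ i ∈ N, α i = 1
    · obtain ⟨i, hi, hαi⟩ := hex
      exact Or.inr (two_mul_count N α i hi hαi)
    · exact Or.inl (cB_zero hex)
  have hpm : 2 * 2 ^ (m - 1) = 2 ^ m := by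
    rw [← pow_succ']; congr 1; omega
  have hqM : (2:ℕ) ^ M.card ≤ 2 ^ (m - 1) := Nat.pow_le_pow_right (by norm_num) (by omega)
  have hqN : (2:ℕ) ^ N.card ≤ 2 ^ (m - 1) := Nat.pow_le_pow_right (by norm_num) (by omega)
  have hqN2 : 2 * 2 ^ (N.card - 1) = 2 ^ N.card := by
    rw [← pow_succ']; congr 1; omega
  refine ⟨?_, ?_, ?_, ?_⟩
  · rintro ⟨i, hiN, hαi⟩
    have hcB2 : 2 * cB = 2 ^ N.card := two_mul_count N α i hiN hαi
    have e1 : B0 = B := by omega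
    have e2 : A + A0 = 2 ^ m - 2 ^ M.card := by omega
    have e3 : 2 * B = 2 ^ m - 2 ^ N.card := by omega
    rw [hW, e1]
    calc A * (B + B) + 2 * A0 * B = (A + A0) * (2 * B) := by ring
      _ = (2 ^ m - 2 ^ M.card) * (2 ^ m - 2 ^ N.card) := by rw [e2, e3]
  · rintro hnotN ⟨i, hiM, hαi⟩
    have hM1 : 1 ≤ M.card := Finset.card_pos.2 ⟨i, hiM⟩
    have hqM2 : 2 * 2 ^ (M.card - 1) = 2 ^ M.card := by
      rw [← pow_succ']; congr 1; omega
    have hqM' : (2:ℕ) ^ (M.card - 1) ≤ 2 ^ (m - 1) := Nat.pow_le_pow_right (by norm_num) (by omega)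
    have hcB0 : cB = 0 := cB_zero hnotN
    have hcA2 : 2 * cA = 2 ^ M.card := two_mul_count M α i hiM hαi
    have eA : A = 2 ^ (m - 1) - 2 ^ (M.card - 1) := by omega
    have eA0 : A0 = 2 ^ (m - 1) - 2 ^ (M.card - 1) := by omega
    have eB : B = 2 ^ (m - 1) := by omega
    have eB0 : B0 = 2 ^ (m - 1) - 2 ^ N.card := by omega
    rw [hW, eA, eA0, eB, eB0, ← hpm, ← hqM2, ← hqN2]
    zify [hqM', show 2 * 2 ^ (N.card - 1) ≤ 2 ^ (m - 1) by omega,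
      show 2 * 2 ^ (M.card - 1) ≤ 2 * 2 ^ (m - 1) by omega,
      show (2:ℕ) ^ (N.card - 1) ≤ 2 * 2 ^ (m - 1) by omega]
    ring
  · rintro hnotN hnotM
    have hcB0 : cB = 0 := cB_zero hnotN
    have hcA0 : cA = 0 := cB_zero hnotM
    have eA : A = 2 ^ (m - 1) := by omega
    have eA0 : A0 = 2 ^ (m - 1) - 2 ^ M.card := by omega
    have eB : B = 2 ^ (m - 1) := by omega
    have eB0 : B0 = 2 ^ (m - 1) - 2 ^ N.card := by omega
    have hexp : (2:ℕ) ^ (m + N.card - 1) = 2 ^ (m - 1) * 2 ^ N.card := by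
      rw [← pow_add]; congr 1; omega
    have hbig : 2 ^ (m - 1) * 2 ^ N.card ≤ 2 * 2 ^ (m - 1) * (2 * 2 ^ (m - 1) - 2 ^ M.card) :=
      Nat.mul_le_mul (by omega) (by omega)
    rw [hW, eA, eA0, eB, eB0, hexp, ← hpm]
    zify [hqM, hqN, hbig, show (2:ℕ) ^ M.card ≤ 2 * 2 ^ (m - 1) by omega]
    ring
  · have hB0B : B0 ≤ B := by rcases hcB with h | h <;> omega
    have eAA : A + A0 = 2 ^ m - 2 ^ M.card := by omega
    have eBB : B + B0 = 2 ^ m - 2 ^ N.card := by omega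
    rw [hW, ← eAA, ← eBB]
    have h9 : A0 * B0 ≤ A0 * B := Nat.mul_le_mul le_rfl hB0B
    calc (A + A0) * (B + B0) = (A * (B + B0) + A0 * B) + A0 * B0 := by ring
      _ ≤ (A * (B + B0) + A0 * B) + A0 * B := by omega
      _ = A * (B + B0) + 2 * A0 * B := by ring

lemma sum_dotp_eq_zero (K : Finset (Fin m)) (hm2 : 2 ≤ m) (hKc : K.card < m)
    (hK1 : K.card ≠ 1) (γ : Fin m → ZMod 2) :
    (∑ t ∈ (deltaC K)ᶜ, dotp t γ) = 0 := by
  classical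
  rw [sum_zmod, ZMod.natCast_eq_zero_iff]
  by_cases hγ : γ = 0
  · subst hγ
    have he : ((deltaC K)ᶜ.filter (fun t => dotp t (0 : Fin m → ZMod 2) = 1)) = ∅ := by
      apply Finset.filter_eq_empty_iff.2
      intro t _
      rw [dotp_zero_right]
      decide
    rw [he]
    simp
  · have hex : ∃ i, γ i = 1 := by
      by_contra h
      push_neg at h
      apply hγ
      funext i
      rcases z2 (γ i) with h0 | h0
      · rw [h0]; rfl
      · exact absurd h0 (h i)
    obtain ⟨i0, hi0⟩ := hex
    have h1 := compl_count K (fun t => dotp t γ = 1)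
    have h5 := count_split K γ
    have h8 : 2 * ((Finset.univ : Finset (Fin m → ZMod 2)).filter (fun t => dotp t γ = 1)).card = 2 ^ m := by
      have h := two_mul_count (Finset.univ : Finset (Fin m)) γ i0 (Finset.mem_univ _) hi0
      rwa [deltaC_univ, Finset.card_univ, Fintype.card_fin] at h
    have hcK : ((deltaC K).filter (fun t => dotp t γ = 1)).card = 0
        ∨ 2 * ((deltaC K).filter (fun t => dotp t γ = 1)).card = 2 ^ K.card := by
      by_cases hex : ∃ i ∈ K, γ i = 1
      · obtain ⟨i, hi, hαi⟩ := hex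
        exact Or.inr (two_mul_count K γ i hi hαi)
      · exact Or.inl (cB_zero hex)
    have h4m : (2:ℕ) ^ m = 4 * 2 ^ (m - 2) := by
      rw [show (4:ℕ) = 2 ^ 2 by norm_num, ← pow_add]; congr 1; omega
    rcases Nat.eq_zero_or_pos K.card with hK0 | hKpos
    · rw [hK0] at hcK
      simp only [pow_zero] at hcK
      omega
    · have hK2 : 2 ≤ K.card := by omega
      have h4K : (2:ℕ) ^ K.card = 4 * 2 ^ (K.card - 2) := by
        rw [show (4:ℕ) = 2 ^ 2 by norm_num, ← pow_add]; congr 1; omega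
      omega

end Aux18
namespace Aux18
variable {m : ℕ}

lemma gcwR_add (Ds : Finset ((Fin m → ZMod 2) × (Fin m → ZMod 2)))
    (v w : (Fin m → ZMod 2) × (Fin m → ZMod 2)) :
    gcwR Ds (v + w) = gcwR Ds v + gcwR Ds w := by
  funext x
  rw [Pi.add_apply]
  have hc : cwR Ds (v + w) x.1 = cwR Ds v x.1 + cwR Ds w x.1 := by
    simp [cwR, Prod.fst_add, dotp_add_right, Prod.ext_iff]
  show grayPair (cwR Ds (v + w) x.1) x.2 = grayPair (cwR Ds v x.1) x.2 + grayPair (cwR Ds w x.1) x.2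
  rw [hc, grayPair_add]

end Aux18

open Aux18 in
theorem stmt_18 {m : ℕ} (hm : 1 ≤ m) (M N : Finset (Fin m))
    (hMu : M ≠ Finset.univ) (hN : N ≠ ∅) (hNu : N ≠ Finset.univ)
    (Ds : Finset ((Fin m → ZMod 2) × (Fin m → ZMod 2)))
    (hDs : Ds = (deltaC M)ᶜ ×ˢ (deltaC N)ᶜ) :
    (2 * Ds.card = 2 * ((2 ^ m - 2 ^ M.card) * (2 ^ m - 2 ^ N.card))) ∧
    ((Finset.univ : Finset ((Fin m → ZMod 2) × (Fin m → ZMod 2))).image (gcwR Ds)).card = 2 ^ m ∧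
    (∀ v w : (Fin m → ZMod 2) × (Fin m → ZMod 2), ∃ z : (Fin m → ZMod 2) × (Fin m → ZMod 2), gcwR Ds z = gcwR Ds v + gcwR Ds w) ∧
    (∀ v : (Fin m → ZMod 2) × (Fin m → ZMod 2), gcwR Ds v ≠ 0 → (2 ^ m - 2 ^ M.card) * (2 ^ m - 2 ^ N.card) ≤ hammingNorm (gcwR Ds v)) ∧
    (∃ v : (Fin m → ZMod 2) × (Fin m → ZMod 2), gcwR Ds v ≠ 0 ∧ hammingNorm (gcwR Ds v) = (2 ^ m - 2 ^ M.card) * (2 ^ m - 2 ^ N.card)) ∧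
    (∀ v : (Fin m → ZMod 2) × (Fin m → ZMod 2), gcwR Ds v ≠ 0 →
        hammingNorm (gcwR Ds v) = (2 ^ m - 2 ^ M.card) * (2 ^ m - 2 ^ (N.card - 1)) ∨
        hammingNorm (gcwR Ds v) = 2 ^ m * (2 ^ m - 2 ^ M.card) - 2 ^ (m + N.card - 1) ∨
        hammingNorm (gcwR Ds v) = (2 ^ m - 2 ^ M.card) * (2 ^ m - 2 ^ N.card)) ∧
    (∀ v w : (Fin m → ZMod 2) × (Fin m → ZMod 2), gcwR Ds v ≠ 0 → gcwR Ds w ≠ 0 →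
      (∀ i, gcwR Ds w i ≠ 0 → gcwR Ds v i ≠ 0) → gcwR Ds w = gcwR Ds v) ∧
    (3 ≤ M.card + N.card →
      ∀ v w : (Fin m → ZMod 2) × (Fin m → ZMod 2), ∑ i, gcwR Ds v i * gcwR Ds w i = 0) := by
  classical
  subst hDs
  obtain ⟨iN, hiN⟩ := Finset.nonempty_iff_ne_empty.2 hN
  obtain ⟨jM, _, hjM⟩ := Finset.exists_of_ssubset (Finset.ssubset_univ_iff.2 hMu)
  have hMc : M.card < m := by
    have h := Finset.card_lt_card (Finset.ssubset_univ_iff.2 hMu)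
    rwa [Finset.card_univ, Fintype.card_fin] at h
  have hNc : N.card < m := by
    have h := Finset.card_lt_card (Finset.ssubset_univ_iff.2 hNu)
    rwa [Finset.card_univ, Fintype.card_fin] at h
  have hN1 : 1 ≤ N.card := Finset.card_pos.2 ⟨iN, hiN⟩
  have hm2 : 2 ≤ m := by omega
  have hD1 : ei jM ∈ (deltaC M)ᶜ := Finset.mem_compl.2 (ei_not_mem hjM)
  have hnz : ∀ v : (Fin m → ZMod 2) × (Fin m → ZMod 2),
      gcwR ((deltaC M)ᶜ ×ˢ (deltaC N)ᶜ) v ≠ 0 → ∃ i0, v.1 i0 = 1 := by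
    intro v hv
    by_contra h
    push_neg at h
    apply hv
    apply gcwR_zero
    funext i
    rcases z2 (v.1 i) with h0 | h0
    · exact h0
    · exact absurd h0 (h i)
  have hnz2 : ∀ v : (Fin m → ZMod 2) × (Fin m → ZMod 2), ∀ i0, v.1 i0 = 1 →
      gcwR ((deltaC M)ᶜ ×ˢ (deltaC N)ᶜ) v ≠ 0 := by
    intro v i0 hi0 hzero
    obtain ⟨t, htN, htd⟩ := exists_dotp_one N hNu v.1 i0 hi0
    have hmem : (ei jM, t) ∈ (deltaC M)ᶜ ×ˢ (deltaC N)ᶜ :=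
      Finset.mem_product.2 ⟨hD1, Finset.mem_compl.2 htN⟩
    have hval := congrFun hzero (⟨(ei jM, t), hmem⟩, 0)
    have hgv : gcwR ((deltaC M)ᶜ ×ˢ (deltaC N)ᶜ) v (⟨(ei jM, t), hmem⟩, 0) = dotp t v.1 := rfl
    rw [hgv, htd] at hval
    exact one_ne_zero hval
  refine ⟨?_, ?_, ?_, ?_, ?_, ?_, ?_, ?_⟩
  · rw [Finset.card_product, Finset.card_compl, Finset.card_compl, card_deltaC, card_deltaC,
      card_space]
  · have himg : ((Finset.univ : Finset ((Fin m → ZMod 2) × (Fin m → ZMod 2))).image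
        (gcwR ((deltaC M)ᶜ ×ˢ (deltaC N)ᶜ)))
        = (Finset.univ : Finset (Fin m → ZMod 2)).image
            (fun a => gcwR ((deltaC M)ᶜ ×ˢ (deltaC N)ᶜ) (a, (0 : Fin m → ZMod 2))) := by
      ext y
      simp only [Finset.mem_image, Finset.mem_univ, true_and]
      constructor
      · rintro ⟨v, rfl⟩
        exact ⟨v.1, gcwR_fst_eq _ (v.1, 0) v rfl⟩
      · rintro ⟨a, ha⟩
        exact ⟨(a, 0), ha⟩
    have hinj : Function.Injective
        (fun a : Fin m → ZMod 2 => gcwR ((deltaC M)ᶜ ×ˢ (deltaC N)ᶜ) (a, (0 : Fin m → ZMod 2))) := by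
      intro a a' h
      by_contra hne
      have hex : ∃ i, a i ≠ a' i := by
        by_contra hc; push_neg at hc; exact hne (funext hc)
      obtain ⟨i, hi⟩ := hex
      have hγ : (a + a') i = 1 := z2neadd _ _ hi
      obtain ⟨t, htN, htd⟩ := exists_dotp_one N hNu (a + a') i hγ
      have hmem : (ei jM, t) ∈ (deltaC M)ᶜ ×ˢ (deltaC N)ᶜ :=
        Finset.mem_product.2 ⟨hD1, Finset.mem_compl.2 htN⟩
      have heq := congrFun h (⟨(ei jM, t), hmem⟩, 0)
      have hg1 : gcwR ((deltaC M)ᶜ ×ˢ (deltaC N)ᶜ) (a, (0:Fin m → ZMod 2)) (⟨(ei jM, t), hmem⟩, 0) = dotp t a := rfl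
      have hg2 : gcwR ((deltaC M)ᶜ ×ˢ (deltaC N)ᶜ) (a', (0:Fin m → ZMod 2)) (⟨(ei jM, t), hmem⟩, 0) = dotp t a' := rfl
      have heq2 : dotp t a = dotp t a' := hg1 ▸ hg2 ▸ heq
      rw [dotp_add_right, heq2] at htd
      have hz : dotp t a' + dotp t a' = 0 := by
        rcases z2 (dotp t a') with h0 | h0 <;> rw [h0] <;> decide
      rw [hz] at htd
      exact zero_ne_one htd
    rw [himg, Finset.card_image_of_injective _ hinj, Finset.card_univ, card_space]
  · intro v w
    exact ⟨v + w, gcwR_add _ v w⟩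
  · intro v hv
    obtain ⟨i0, hi0⟩ := hnz v hv
    have hwm := weight_master M N hm hMc hNc hN1 v.1 v.2 i0 hi0
    simpa only [Prod.mk.eta] using hwm.2.2.2
  · refine ⟨(ei iN, 0), hnz2 (ei iN, 0) iN (by simp [ei]), ?_⟩
    have hwm := weight_master M N hm hMc hNc hN1 (ei iN) 0 iN (by simp [ei])
    exact hwm.1 ⟨iN, hiN, by simp [ei]⟩
  · intro v hv
    obtain ⟨i0, hi0⟩ := hnz v hv
    have hwm := weight_master M N hm hMc hNc hN1 v.1 v.2 i0 hi0
    simp only [Prod.mk.eta] at hwm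
    by_cases hNex : ∃ i ∈ N, v.1 i = 1
    · exact Or.inr (Or.inr (hwm.1 hNex))
    · by_cases hMex : ∃ i ∈ M, v.1 i = 1
      · exact Or.inl (hwm.2.1 hNex hMex)
      · exact Or.inr (Or.inl (hwm.2.2.1 hNex hMex))
  · intro v w hv hw hsupp
    obtain ⟨i0, hi0⟩ := hnz w hw
    have H : ∀ u, dotp u w.1 = 1 → dotp u v.1 = 1 := by
      intro u hu
      by_cases hcase : u ∈ deltaC N
      · obtain ⟨t₁, ht₁M, ht₂N⟩ := sumset M N hMc hNc u hcase
        have hmem : (t₁, u + t₁) ∈ (deltaC M)ᶜ ×ˢ (deltaC N)ᶜ :=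
          Finset.mem_product.2 ⟨Finset.mem_compl.2 ht₁M, Finset.mem_compl.2 ht₂N⟩
        have hval : ∀ z : (Fin m → ZMod 2) × (Fin m → ZMod 2),
            gcwR ((deltaC M)ᶜ ×ˢ (deltaC N)ᶜ) z (⟨(t₁, u + t₁), hmem⟩, 1) = dotp u z.1 := by
          intro z
          have hv1 : gcwR ((deltaC M)ᶜ ×ˢ (deltaC N)ᶜ) z (⟨(t₁, u + t₁), hmem⟩, 1)
              = dotp t₁ z.1 + dotp (u + t₁) z.1 := rfl
          rw [hv1, dotp_add_left, z2add]
        have h1 : gcwR ((deltaC M)ᶜ ×ˢ (deltaC N)ᶜ) w (⟨(t₁, u + t₁), hmem⟩, 1) ≠ 0 := by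
          rw [hval w, hu]; exact one_ne_zero
        have h2 := hsupp _ h1
        rw [hval v] at h2
        exact (z2ne _).1 h2
      · have hmem : (ei jM, u) ∈ (deltaC M)ᶜ ×ˢ (deltaC N)ᶜ :=
          Finset.mem_product.2 ⟨hD1, Finset.mem_compl.2 hcase⟩
        have hval : ∀ z : (Fin m → ZMod 2) × (Fin m → ZMod 2),
            gcwR ((deltaC M)ᶜ ×ˢ (deltaC N)ᶜ) z (⟨(ei jM, u), hmem⟩, 0) = dotp u z.1 :=
          fun z => rfl
        have h1 : gcwR ((deltaC M)ᶜ ×ˢ (deltaC N)ᶜ) w (⟨(ei jM, u), hmem⟩, 0) ≠ 0 := by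
          rw [hval w, hu]; exact one_ne_zero
        have h2 := hsupp _ h1
        rw [hval v] at h2
        exact (z2ne _).1 h2
    exact gcwR_fst_eq _ w v (eq_of_dotp_imp v.1 w.1 i0 hi0 H).symm
  · intro h3 v w
    rw [sum_gcwR_mul]
    have hX : (∑ t₁ ∈ (deltaC M)ᶜ, ∑ t₂ ∈ (deltaC N)ᶜ, dotp t₁ v.1 * dotp t₁ w.1) = 0 := by
      apply Finset.sum_eq_zero
      intro t₁ _
      rw [Finset.sum_const, nsmul_eq_mul]
      have hc : ((((deltaC N)ᶜ).card : ℕ) : ZMod 2) = 0 := by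
        rw [Finset.card_compl, card_deltaC, card_space, ZMod.natCast_eq_zero_iff]
        have e1 : 2 * 2 ^ (m - 1) = 2 ^ m := by rw [← pow_succ']; congr 1; omega
        have e2 : 2 * 2 ^ (N.card - 1) = 2 ^ N.card := by rw [← pow_succ']; congr 1; omega
        have e3 : (2:ℕ) ^ N.card ≤ 2 ^ m := Nat.pow_le_pow_right (by norm_num) (by omega)
        omega
      rw [hc, zero_mul]
    have hY : (∑ t₁ ∈ (deltaC M)ᶜ, dotp t₁ v.1) * (∑ t₂ ∈ (deltaC N)ᶜ, dotp t₂ w.1)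
        = ∑ t₁ ∈ (deltaC M)ᶜ, ∑ t₂ ∈ (deltaC N)ᶜ, dotp t₁ v.1 * dotp t₂ w.1 :=
      Finset.sum_mul_sum _ _ _ _
    have hZ : (∑ t₂ ∈ (deltaC N)ᶜ, dotp t₂ v.1) * (∑ t₁ ∈ (deltaC M)ᶜ, dotp t₁ w.1)
        = ∑ t₁ ∈ (deltaC M)ᶜ, ∑ t₂ ∈ (deltaC N)ᶜ, dotp t₂ v.1 * dotp t₁ w.1 := by
      rw [Finset.sum_mul_sum]
      exact Finset.sum_comm
    have hsum : (∑ t₁ ∈ (deltaC M)ᶜ, ∑ t₂ ∈ (deltaC N)ᶜ,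
        (dotp t₁ v.1 * dotp t₁ w.1 + dotp t₁ v.1 * dotp t₂ w.1 + dotp t₂ v.1 * dotp t₁ w.1))
        = (∑ t₁ ∈ (deltaC M)ᶜ, ∑ t₂ ∈ (deltaC N)ᶜ, dotp t₁ v.1 * dotp t₁ w.1)
          + (∑ t₁ ∈ (deltaC M)ᶜ, dotp t₁ v.1) * (∑ t₂ ∈ (deltaC N)ᶜ, dotp t₂ w.1)
          + (∑ t₂ ∈ (deltaC N)ᶜ, dotp t₂ v.1) * (∑ t₁ ∈ (deltaC M)ᶜ, dotp t₁ w.1) := by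
      simp only [Finset.sum_add_distrib]
      rw [hY, hZ]
    rw [hsum, hX, zero_add]
    rcases Nat.lt_or_ge N.card 2 with hN2 | hN2
    · have hMcard : M.card ≠ 1 := by omega
      rw [sum_dotp_eq_zero M hm2 hMc hMcard v.1, zero_mul, zero_add,
        sum_dotp_eq_zero M hm2 hMc hMcard w.1, mul_zero]
    · have hNcard : N.card ≠ 1 := by omega
      rw [sum_dotp_eq_zero N hm2 hNc hNcard w.1, mul_zero, zero_add,
        sum_dotp_eq_zero N hm2 hNc hNcard v.1, zero_mul]
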